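/- Let δ ≥ 1 be an integer and let (V, E) be a finite simple graph such that deg(v₁) + deg(v₂) ≥ δ holds for every edge (v₁, v₂) ∈ E. If (V, E) has no isolated vertices, then δ·|E| ≥ (δ − 1)·|V| (equivalently, |E| ≥ (1 − 1/δ)·|V|). -/

import Mathlib

open Finset

lemma key_nat (k a b : ℕ) (ha : 1 ≤ a) (hb : 1 ≤ b) (hab : k + 1 ≤ a + b) :
    k * (a + b) ≤ (k + 1) * (a * b) := by
  rcases eq_or_lt_of_le ha with rfl | ha2
  · nlinarith
  rcases eq_or_lt_of_le hb with rfl | hb2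
  · nlinarith
  · have : a + b ≤ a * b := by nlinarith
    nlinarith

/-- **Lemma.** Let `δ ≥ 1` and let `(V, E)` be a finite simple graph in which
`deg(v₁) + deg(v₂) ≥ δ` for every edge `(v₁, v₂)`. If there are no isolated vertices, then
`δ·|E| ≥ (δ - 1)·|V|`. -/
theorem stmt_13 (δ : ℕ) (hδ : 1 ≤ δ) (V : Type*) [Fintype V] (Γ : SimpleGraph V)
    (hdeg : ∀ v₁ v₂ : V, Γ.Adj v₁ v₂ →
      δ ≤ (Γ.neighborSet v₁).ncard + (Γ.neighborSet v₂).ncard)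
    (hiso : ∀ v : V, ∃ w : V, Γ.Adj v w) :
    (δ - 1) * Fintype.card V ≤ δ * Γ.edgeSet.ncard := by
  classical
  obtain ⟨k, rfl⟩ : ∃ k, δ = k + 1 := ⟨δ - 1, (Nat.succ_pred_eq_of_pos hδ).symm⟩
  simp only [Nat.add_sub_cancel]
  rcases Nat.eq_zero_or_pos k with rfl | hk
  · simp
  have hdeg' : ∀ v₁ v₂ : V, Γ.Adj v₁ v₂ → k + 1 ≤ Γ.degree v₁ + Γ.degree v₂ := by
    intro v₁ v₂ h
    have hn : ∀ v : V, (Γ.neighborSet v).ncard = Γ.degree v := fun v => by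
      rw [Set.ncard_eq_toFinset_card', Set.toFinset_card, Γ.card_neighborSet_eq_degree]
    have := hdeg v₁ v₂ h
    rwa [hn, hn] at this
  have hdpos : ∀ v : V, 1 ≤ Γ.degree v := by
    intro v
    obtain ⟨w, hw⟩ := hiso v
    exact (Γ.degree_pos_iff_exists_adj v).2 ⟨w, hw⟩
  set f : V → ℚ := fun v => 1 / (Γ.degree v) with hf
  have hdne : ∀ v : V, (Γ.degree v : ℚ) ≠ 0 := fun v =>
    Nat.cast_ne_zero.2 (Nat.one_le_iff_ne_zero.mp (hdpos v))
  -- sum over darts fiberwise over fst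
  have hA : ∑ d : Γ.Dart, f d.fst = (Fintype.card V : ℚ) := by
    rw [← Finset.sum_fiberwise_of_maps_to (g := fun d : Γ.Dart => d.fst)
      (fun d _ => Finset.mem_univ d.fst)]
    have : ∀ v : V, ∑ d ∈ univ.filter (fun d : Γ.Dart => d.fst = v), f d.fst
        = (Γ.degree v : ℚ) * f v := by
      intro v
      rw [Finset.sum_congr rfl (fun d hd => by
        rw [(Finset.mem_filter.mp hd).2]), Finset.sum_const, nsmul_eq_mul]
      congr 1
      exact_mod_cast Γ.dart_fst_fiber_card_eq_degree v
    rw [Finset.sum_congr rfl fun v _ => this v]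
    have : ∀ v : V, (Γ.degree v : ℚ) * f v = 1 := fun v =>
      mul_one_div_cancel (hdne v)
    rw [Finset.sum_congr rfl fun v _ => this v]
    simp [Finset.card_univ]
  -- sum over darts fiberwise over edge
  have hB : ∑ d : Γ.Dart, f d.fst = ∑ e ∈ Γ.edgeFinset, ∑ d ∈ univ.filter
      (fun d : Γ.Dart => d.edge = e), f d.fst := by
    rw [Finset.sum_fiberwise_of_maps_to (fun d _ => SimpleGraph.mem_edgeFinset.2 d.edge_mem)]
  -- bound each edge fiber
  have hbound : ∀ e ∈ Γ.edgeFinset, ∑ d ∈ univ.filter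
      (fun d : Γ.Dart => d.edge = e), f d.fst ≤ ((k:ℚ) + 1) / k := by
    intro e he
    rw [SimpleGraph.mem_edgeFinset] at he
    induction e with
    | _ u v =>
      have hadj : Γ.Adj u v := he
      let d : Γ.Dart := ⟨(u, v), hadj⟩
      have hfib : (univ.filter (fun d' : Γ.Dart => d'.edge = d.edge)) = {d, d.symm} := by
        simpa using d.edge_fiber
      have hde : d.edge = s(u, v) := rfl
      rw [← hde, hfib, Finset.sum_pair d.symm_ne.symm]
      have hfst : d.fst = u := rfl
      have hfst' : d.symm.fst = v := rfl
      rw [hfst, hfst']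
      -- now show f u + f v ≤ (k+1)/k
      have hsum := hdeg' u v hadj
      set a := Γ.degree u
      set b := Γ.degree v
      have hkey := key_nat k a b (hdpos u) (hdpos v) hsum
      have ha0 : (0:ℚ) < (a:ℚ) := by exact_mod_cast hdpos u
      have hb0 : (0:ℚ) < (b:ℚ) := by exact_mod_cast hdpos v
      have hk0 : (0:ℚ) < (k:ℚ) := by exact_mod_cast hk
      rw [hf]
      simp only
      rw [div_add_div _ _ ha0.ne' hb0.ne', div_le_div_iff₀ (by positivity) hk0]
      have hkeyQ : (k:ℚ) * ((a:ℚ) + (b:ℚ)) ≤ ((k:ℚ) + 1) * ((a:ℚ) * (b:ℚ)) := by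
        exact_mod_cast hkey
      nlinarith [hkeyQ]
  -- combine
  have hcard : (Fintype.card V : ℚ) ≤ (Γ.edgeFinset.card : ℚ) * (((k:ℚ)+1)/k) := by
    rw [← hA, hB]
    calc ∑ e ∈ Γ.edgeFinset, ∑ d ∈ univ.filter (fun d : Γ.Dart => d.edge = e), f d.fst
        ≤ ∑ e ∈ Γ.edgeFinset, ((k:ℚ)+1)/k := Finset.sum_le_sum hbound
      _ = (Γ.edgeFinset.card : ℚ) * (((k:ℚ)+1)/k) := by rw [Finset.sum_const, nsmul_eq_mul]
  have hk0 : (0:ℚ) < (k:ℚ) := by exact_mod_cast hk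
  have : (k:ℚ) * (Fintype.card V : ℚ) ≤ ((k:ℚ)+1) * (Γ.edgeFinset.card : ℚ) := by
    have := mul_le_mul_of_nonneg_left hcard hk0.le
    calc (k:ℚ) * (Fintype.card V : ℚ) ≤ (k:ℚ) * ((Γ.edgeFinset.card : ℚ) * (((k:ℚ)+1)/k)) := this
      _ = ((k:ℚ)+1) * (Γ.edgeFinset.card : ℚ) := by field_simp
  have hfin : k * Fintype.card V ≤ (k+1) * Γ.edgeFinset.card := by exact_mod_cast this
  calc k * Fintype.card V ≤ (k+1) * Γ.edgeFinset.card := hfin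
    _ = (k+1) * Γ.edgeSet.ncard := by
        congr 1
        rw [Set.ncard_eq_toFinset_card']
        congr 1
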